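/- If an e-merging function F is admissible, then F is upper semicontinuous on [0,∞)^K. -/

import Mathlib

open MeasureTheory
open scoped ENNReal NNReal BigOperators

/-- An e-merging function (arbitrary dependence). -/
def IsEMerging (K : ℕ) (F : (Fin K → ℝ) → ℝ) : Prop :=
  Monotone F ∧ Measurable F ∧ (∀ e, 0 ≤ F e) ∧
  ∀ (Ω : Type) [MeasurableSpace Ω] (Q : Measure Ω), IsProbabilityMeasure Q →
    ∀ E : Fin K → Ω → ℝ, (∀ k, Measurable (E k)) → (∀ k ω, 0 ≤ E k ω) →
      (∀ k, ∫⁻ ω, ENNReal.ofReal (E k ω) ∂Q ≤ 1) →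
      ∫⁻ ω, ENNReal.ofReal (F (fun k => E k ω)) ∂Q ≤ 1

/-- An e-merging function is admissible if no e-merging function strictly dominates it
on `[0,∞)^K`. -/
def IsAdmissibleEMerging (K : ℕ) (F : (Fin K → ℝ) → ℝ) : Prop :=
  IsEMerging K F ∧
  ¬ ∃ G, IsEMerging K G ∧
    (∀ e : Fin K → ℝ, (∀ k, 0 ≤ e k) → F e ≤ G e) ∧
    (∃ e : Fin K → ℝ, (∀ k, 0 ≤ e k) ∧ F e < G e)

/-- The key "mixing" estimate: if `F` is e-merging and `ε > 0`, then for any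
expectation-at-most-one family `E`, the expectation of `F (E + ε)` is at most `1 + ε`. -/
lemma lintegral_shift_le (K : ℕ) (F : (Fin K → ℝ) → ℝ) (hF : IsEMerging K F)
    {ε : ℝ} (hε : 0 < ε)
    (Ω : Type) [MeasurableSpace Ω] (Q : Measure Ω) (hQ : IsProbabilityMeasure Q)
    (E : Fin K → Ω → ℝ) (hEm : ∀ k, Measurable (E k)) (hEnn : ∀ k ω, 0 ≤ E k ω)
    (hE1 : ∀ k, ∫⁻ ω, ENNReal.ofReal (E k ω) ∂Q ≤ 1) :
    ∫⁻ ω, ENNReal.ofReal (F (fun k => E k ω + ε)) ∂Q ≤ ENNReal.ofReal (1 + ε) := by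
  obtain ⟨hmono, hmeas, hnn, hint⟩ := hF
  set δ : ℝ := ε / (1 + ε) with hδdef
  have h1ε : (0:ℝ) < 1 + ε := by linarith
  have hδpos : 0 < δ := div_pos hε h1ε
  have hδlt : δ < 1 := by
    rw [hδdef, div_lt_one h1ε]; linarith
  have h1δ : 1 - δ = 1 / (1 + ε) := by
    rw [hδdef]; field_simp; ring
  -- the mixed measure on `Ω ⊕ Unit`
  set μ : Measure (Ω ⊕ Unit) :=
    ENNReal.ofReal (1 - δ) • Q.map (Sum.inl : Ω → Ω ⊕ Unit) + ENNReal.ofReal δ • Measure.dirac (Sum.inr () : Ω ⊕ Unit)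
    with hμdef
  have hmapQ : (Q.map (Sum.inl : Ω → Ω ⊕ Unit)) Set.univ = 1 := by
    rw [Measure.map_apply measurable_inl MeasurableSet.univ]
    simp
  have hμprob : IsProbabilityMeasure μ := by
    constructor
    rw [hμdef]
    simp [Measure.add_apply, Measure.smul_apply, hmapQ, smul_eq_mul]
    rw [← ENNReal.ofReal_add (by linarith) (le_of_lt hδpos)]
    simp
  set E' : Fin K → (Ω ⊕ Unit) → ℝ :=
    fun k => Sum.elim (fun ω => E k ω + ε) (fun _ => (0:ℝ)) with hE'def
  have hE'm : ∀ k, Measurable (E' k) := fun k =>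
    Measurable.sumElim ((hEm k).add_const ε) measurable_const
  have hE'nn : ∀ k x, 0 ≤ E' k x := by
    rintro k (ω | u)
    · exact add_nonneg (hEnn k ω) hε.le
    · exact le_refl 0
  have key : ∀ (g : (Ω ⊕ Unit) → ℝ), Measurable g →
      ∫⁻ x, ENNReal.ofReal (g x) ∂μ
        = ENNReal.ofReal (1 - δ) * ∫⁻ ω, ENNReal.ofReal (g (Sum.inl ω)) ∂Q
          + ENNReal.ofReal δ * ENNReal.ofReal (g (Sum.inr ())) := by
    intro g hg
    rw [hμdef, lintegral_add_measure, lintegral_smul_measure, lintegral_smul_measure,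
      lintegral_map hg.ennreal_ofReal measurable_inl,
      lintegral_dirac' _ hg.ennreal_ofReal]
    simp only [smul_eq_mul]
  have hE'1 : ∀ k, ∫⁻ x, ENNReal.ofReal (E' k x) ∂μ ≤ 1 := by
    intro k
    rw [key (E' k) (hE'm k)]
    simp only [hE'def, Sum.elim_inl, Sum.elim_inr]
    have : ∫⁻ ω, ENNReal.ofReal (E k ω + ε) ∂Q ≤ 1 + ENNReal.ofReal ε := by
      calc ∫⁻ ω, ENNReal.ofReal (E k ω + ε) ∂Q
          = ∫⁻ ω, (ENNReal.ofReal (E k ω) + ENNReal.ofReal ε) ∂Q := by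
            congr 1; funext ω; rw [ENNReal.ofReal_add (hEnn k ω) hε.le]
        _ = (∫⁻ ω, ENNReal.ofReal (E k ω) ∂Q) + ENNReal.ofReal ε := by
            rw [lintegral_add_right _ measurable_const, lintegral_const, measure_univ,
              mul_one]
        _ ≤ 1 + ENNReal.ofReal ε := by gcongr; exact hE1 k
    calc ENNReal.ofReal (1 - δ) * ∫⁻ ω, ENNReal.ofReal (E k ω + ε) ∂Q
          + ENNReal.ofReal δ * ENNReal.ofReal 0
        ≤ ENNReal.ofReal (1 - δ) * (1 + ENNReal.ofReal ε) + 0 := by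
          gcongr; simp
      _ = ENNReal.ofReal (1 - δ) * ENNReal.ofReal (1 + ε) := by
          rw [add_zero]; congr 1
          rw [ENNReal.ofReal_add (by norm_num) hε.le]; simp
      _ = ENNReal.ofReal ((1 - δ) * (1 + ε)) := by
          rw [ENNReal.ofReal_mul (by linarith)]
      _ = 1 := by
          rw [h1δ]; rw [div_mul_eq_mul_div, one_mul, div_self (ne_of_gt h1ε)]; simp
  have hFint := hint (Ω ⊕ Unit) μ hμprob E' hE'm hE'nn hE'1
  have hFmeas : Measurable fun x => F (fun k => E' k x) :=
    hmeas.comp (measurable_pi_lambda _ fun k => hE'm k)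
  rw [key _ hFmeas] at hFint
  simp only [hE'def, Sum.elim_inl, Sum.elim_inr] at hFint
  have hle : ENNReal.ofReal (1 - δ)
      * ∫⁻ ω, ENNReal.ofReal (F (fun k => E k ω + ε)) ∂Q ≤ 1 :=
    le_trans (le_add_of_nonneg_right zero_le) hFint
  have hc : ENNReal.ofReal (1 - δ) = (ENNReal.ofReal (1 + ε))⁻¹ := by
    rw [h1δ, one_div, ENNReal.ofReal_inv_of_pos h1ε]
  rw [hc] at hle
  have hne : (ENNReal.ofReal (1 + ε)) ≠ 0 := by
    simp [ENNReal.ofReal_eq_zero]; linarith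
  calc ∫⁻ ω, ENNReal.ofReal (F (fun k => E k ω + ε)) ∂Q
      = ENNReal.ofReal (1 + ε) * ((ENNReal.ofReal (1 + ε))⁻¹
          * ∫⁻ ω, ENNReal.ofReal (F (fun k => E k ω + ε)) ∂Q) := by
        rw [← mul_assoc, ENNReal.mul_inv_cancel hne ENNReal.ofReal_ne_top, one_mul]
    _ ≤ ENNReal.ofReal (1 + ε) * 1 := by gcongr
    _ = ENNReal.ofReal (1 + ε) := mul_one _

/-- an admissible e-merging function is upper semicontinuous on
`[0,∞)^K`. -/
theorem admissible_e_merging_usc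
    (K : ℕ) (F : (Fin K → ℝ) → ℝ) (hF : IsAdmissibleEMerging K F) :
    UpperSemicontinuousOn F {e : Fin K → ℝ | ∀ k, 0 ≤ e k} := by
  obtain ⟨hFe, hnot⟩ := hF
  obtain ⟨hmono, hmeas, hnn, hint⟩ := hFe
  -- the upper semicontinuous envelope
  set G : (Fin K → ℝ) → ℝ :=
    fun e => ⨅ n : ℕ, F (fun k => e k + 1 / (n + 1)) with hGdef
  have hbdd : ∀ e : Fin K → ℝ,
      BddBelow (Set.range fun n : ℕ => F (fun k => e k + 1 / (n + 1))) := by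
    intro e
    exact ⟨0, by rintro x ⟨n, rfl⟩; exact hnn _⟩
  have hFG : ∀ e, F e ≤ G e := by
    intro e
    refine le_ciInf fun n => hmono fun k => ?_
    simp only [le_add_iff_nonneg_right]
    positivity
  have hGle : ∀ (e : Fin K → ℝ) (n : ℕ), G e ≤ F (fun k => e k + 1 / (n + 1)) :=
    fun e n => ciInf_le (hbdd e) n
  have hGmono : Monotone G := by
    intro a b hab
    refine ciInf_mono (hbdd a) fun n => hmono fun k => ?_
    exact (add_le_add_iff_right _).mpr (hab k)
  have hGmeas : Measurable G := by
    refine Measurable.iInf fun n => ?_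
    exact hmeas.comp (measurable_pi_lambda _ fun k =>
      (measurable_pi_apply k).add_const _)
  have hGnn : ∀ e, 0 ≤ G e := fun e =>
    le_ciInf fun n => hnn _
  have hGint : ∀ (Ω : Type) [MeasurableSpace Ω] (Q : Measure Ω),
      IsProbabilityMeasure Q →
      ∀ E : Fin K → Ω → ℝ, (∀ k, Measurable (E k)) → (∀ k ω, 0 ≤ E k ω) →
        (∀ k, ∫⁻ ω, ENNReal.ofReal (E k ω) ∂Q ≤ 1) →
        ∫⁻ ω, ENNReal.ofReal (G (fun k => E k ω)) ∂Q ≤ 1 := by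
    intro Ω _ Q hQ E hEm hEnn hE1
    have step : ∀ n : ℕ, ∫⁻ ω, ENNReal.ofReal (G (fun k => E k ω)) ∂Q
        ≤ ENNReal.ofReal (1 + 1 / (n + 1)) := by
      intro n
      have hεpos : (0:ℝ) < 1 / (n + 1) := by positivity
      calc ∫⁻ ω, ENNReal.ofReal (G (fun k => E k ω)) ∂Q
          ≤ ∫⁻ ω, ENNReal.ofReal (F (fun k => E k ω + 1 / (n + 1))) ∂Q := by
            refine lintegral_mono fun ω => ENNReal.ofReal_le_ofReal ?_
            exact hGle _ n
        _ ≤ ENNReal.ofReal (1 + 1 / (n + 1)) :=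
            lintegral_shift_le K F ⟨hmono, hmeas, hnn, hint⟩ hεpos Ω Q hQ E hEm hEnn hE1
    refine ENNReal.le_of_forall_pos_le_add fun η hη h1 => ?_
    obtain ⟨n, hn⟩ := exists_nat_one_div_lt (show (0:ℝ) < η from hη)
    calc ∫⁻ ω, ENNReal.ofReal (G (fun k => E k ω)) ∂Q
        ≤ ENNReal.ofReal (1 + 1 / (n + 1)) := step n
      _ = 1 + ENNReal.ofReal (1 / (n + 1)) := by
          rw [ENNReal.ofReal_add (by norm_num) (by positivity)]; simp
      _ ≤ 1 + η := by
          gcongr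
          rw [← ENNReal.ofReal_coe_nnreal]
          exact ENNReal.ofReal_le_ofReal hn.le
  -- admissibility forces `F = G` on the orthant
  have hEq : ∀ e : Fin K → ℝ, (∀ k, 0 ≤ e k) → F e = G e := by
    intro e he
    by_contra hne
    exact hnot ⟨G, ⟨hGmono, hGmeas, hGnn, hGint⟩,
      fun e' _ => hFG e', ⟨e, he, lt_of_le_of_ne (hFG e) hne⟩⟩
  -- now prove upper semicontinuity
  intro x hx y hy
  rw [hEq x hx] at hy
  obtain ⟨n, hn⟩ : ∃ n : ℕ, F (fun k => x k + 1 / (n + 1)) < y := by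
    by_contra h
    push_neg at h
    exact absurd (le_ciInf h) (not_le.mpr hy)
  set ε : ℝ := 1 / (n + 1) with hεdef
  have hεpos : (0:ℝ) < ε := by positivity
  obtain ⟨m, hm⟩ := exists_nat_one_div_lt (show (0:ℝ) < ε / 2 by linarith)
  have hnear : ∀ᶠ x' in nhdsWithin x {e : Fin K → ℝ | ∀ k, 0 ≤ e k},
      ∀ k, x' k < x k + ε / 2 := by
    apply Filter.Eventually.filter_mono nhdsWithin_le_nhds
    rw [Filter.eventually_all]
    intro k
    have : ContinuousAt (fun x' : Fin K → ℝ => x' k) x := (continuous_apply k).continuousAt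
    exact this.eventually_lt continuousAt_const (by linarith)
  filter_upwards [hnear, eventually_mem_nhdsWithin] with x' hx' hx'mem
  have hx'nn : ∀ k, 0 ≤ x' k := hx'mem
  rw [hEq x' hx'nn]
  calc G x' ≤ F (fun k => x' k + 1 / (m + 1)) := hGle x' m
    _ ≤ F (fun k => x k + ε) := by
        refine hmono fun k => ?_
        have := hx' k
        have := hm
        linarith
    _ < y := hn
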